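/- (Global key lemma for periodic event-triggered control.) Let Assumptions 1–4' hold, suppose κ, ν and M are globally bounded on ℝ^d, γ is C¹ with inf_{v ≥ 0} γ'(v) > -∞, and fix σ̃ ∈ (σ,1) and K > 1. Define P(x,u) to hold iff W(x,u) < -σ̃·γ(V(x)) and |∇V(x)|·|F(x,u)| + |F(x,u)|² ≤ K·M(x)·|W(x,u)|. Then the function τ⁰ : ℝ^d → (0,∞) from the key lemma can be chosen globally uniformly positive, inf_{x* ∈ ℝ^d} τ⁰(x*) > 0, where τ⁰ satisfies: whenever x* ≠ 0, x̄ ∈ B(x*) and P(x̄, 𝒰(x*)) holds, there is a solution ξ : [0, τ⁰(x*)] → ℝ^d of ξ'(t) = F(ξ(t), 𝒰(x*)) with ξ(0) = x̄ satisfying W(ξ(t), 𝒰(x*)) < -σ·γ(V(ξ(t))) for all t ∈ [0, τ⁰(x*)). -/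

import Mathlib

open Set Filter
open scoped InnerProductSpace Topology

/-- The triggering predicate `P(x,u)` of the periodic event-triggered algorithm:
`W(x,u) < -σ̃·γ(V(x))` and `|∇V(x)|·|F(x,u)| + |F(x,u)|² ≤ K·M(x)·|W(x,u)|`. -/
def trigP (d m : ℕ)
    (F : EuclideanSpace ℝ (Fin d) → EuclideanSpace ℝ (Fin m) → EuclideanSpace ℝ (Fin d))
    (V : EuclideanSpace ℝ (Fin d) → ℝ) (γ : ℝ → ℝ)
    (σtil K : ℝ) (M : EuclideanSpace ℝ (Fin d) → ℝ)
    (x : EuclideanSpace ℝ (Fin d)) (u : EuclideanSpace ℝ (Fin m)) : Prop :=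
  ⟪gradient V x, F x u⟫_ℝ < -σtil * γ (V x) ∧
  ‖gradient V x‖ * ‖F x u‖ + ‖F x u‖ ^ 2 ≤ K * M x * |⟪gradient V x, F x u⟫_ℝ|

set_option maxHeartbeats 1600000 in
/-- Global key lemma for periodic event-triggered control.
Under Assumptions 1–4' with `κ`, `ν`, `M` globally bounded, `γ ∈ C¹` with
`inf_{v≥0} γ'(v) > -∞`, `σ̃ ∈ (σ,1)` and `K > 1`, the function `τ⁰` of the key lemma can be
chosen globally uniformly positive. -/
theorem statement9
    (d m : ℕ)
    (F : EuclideanSpace ℝ (Fin d) → EuclideanSpace ℝ (Fin m) → EuclideanSpace ℝ (Fin d))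
    (U : Set (EuclideanSpace ℝ (Fin m)))
    (𝒰 : EuclideanSpace ℝ (Fin d) → EuclideanSpace ℝ (Fin m))
    (V : EuclideanSpace ℝ (Fin d) → ℝ) (γ : ℝ → ℝ) (σ : ℝ)
    (hσ0 : 0 < σ) (hσ1 : σ < 1)
    (hγc : Continuous γ) (hγpos : ∀ v : ℝ, 0 < v → 0 < γ v)
    (hV : ContDiff ℝ 1 V) (hV0 : V 0 = 0) (hVpos : ∀ x, x ≠ 0 → 0 < V x)
    (hVrad : ∀ c : ℝ, ∃ R : ℝ, ∀ x : EuclideanSpace ℝ (Fin d), R ≤ ‖x‖ → c ≤ V x)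
    (h𝒰U : ∀ x, 𝒰 x ∈ U)
    (hfeed : ∀ x, x ≠ 0 → ⟪gradient V x, F x (𝒰 x)⟫_ℝ ≤ -γ (V x))
    -- Assumption 1
    (hF : ∀ u ∈ U, LocallyLipschitz (fun x => F x u))
    -- Assumption 2, with `κ` globally bounded
    (κ : EuclideanSpace ℝ (Fin d) → ℝ)
    (hκlip : ∀ xs x1 x2 : EuclideanSpace ℝ (Fin d), V x1 ≤ V xs → V x2 ≤ V xs →
      ‖F x1 (𝒰 xs) - F x2 (𝒰 xs)‖ ≤ κ xs * ‖x1 - x2‖)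
    (hκglob : ∃ C : ℝ, ∀ x, κ x ≤ C)
    -- Assumption 3, with `ν` globally bounded
    (hgradlip : LocallyLipschitz (gradient V))
    (ν : EuclideanSpace ℝ (Fin d) → ℝ)
    (hνlip : ∀ xs x1 x2 : EuclideanSpace ℝ (Fin d), V x1 ≤ V xs → V x2 ≤ V xs →
      ‖gradient V x1 - gradient V x2‖ ≤ ν xs * ‖x1 - x2‖)
    (hνglob : ∃ C : ℝ, ∀ x, ν x ≤ C)
    -- Assumption 4', with `M` globally bounded
    (M : EuclideanSpace ℝ (Fin d) → ℝ) (hMpos : ∀ x, 0 < M x)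
    (hMglob : ∃ C : ℝ, ∀ x, M x ≤ C)
    (hMineq : ∀ x, ‖gradient V x‖ * ‖F x (𝒰 x)‖ + ‖F x (𝒰 x)‖ ^ 2 ≤
      M x * |⟪gradient V x, F x (𝒰 x)⟫_ℝ|)
    -- `γ` is `C¹` with derivative bounded below on `[0,∞)`
    (hγ1 : ContDiff ℝ 1 γ)
    (hγ' : ∃ c : ℝ, ∀ v : ℝ, 0 ≤ v → c ≤ deriv γ v)
    -- parameters of the periodic event-triggered algorithm
    (σtil K : ℝ) (hσtil1 : σ < σtil) (hσtil2 : σtil < 1) (hK : 1 < K) :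
    ∃ τ0 : EuclideanSpace ℝ (Fin d) → ℝ,
      (∀ x, 0 < τ0 x) ∧
      (∃ ε > (0 : ℝ), ∀ x : EuclideanSpace ℝ (Fin d), ε ≤ τ0 x) ∧
      (∀ xs : EuclideanSpace ℝ (Fin d), xs ≠ 0 →
        ∀ xbar : EuclideanSpace ℝ (Fin d), V xbar ≤ V xs →
          trigP d m F V γ σtil K M xbar (𝒰 xs) →
          ∃ ξ : ℝ → EuclideanSpace ℝ (Fin d), ξ 0 = xbar ∧
            (∀ t ∈ Icc (0 : ℝ) (τ0 xs),
              HasDerivWithinAt ξ (F (ξ t) (𝒰 xs)) (Icc (0 : ℝ) (τ0 xs)) t) ∧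
            (∀ t ∈ Ico (0 : ℝ) (τ0 xs),
              ⟪gradient V (ξ t), F (ξ t) (𝒰 xs)⟫_ℝ < -σ * γ (V (ξ t)))) := by
  classical
  obtain ⟨Cκ₀, hCκ₀⟩ := hκglob
  obtain ⟨Cν₀, hCν₀⟩ := hνglob
  obtain ⟨CM₀, hCM₀⟩ := hMglob
  obtain ⟨c, hc⟩ := hγ'
  set Cκ : ℝ := max Cκ₀ 0 with hCκdef
  set Cν : ℝ := max Cν₀ 0 with hCνdef
  set CM : ℝ := max CM₀ 0 with hCMdef
  set cm : ℝ := max (-c) 0 with hcmdef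
  have hCκnn : 0 ≤ Cκ := le_max_right _ _
  have hCνnn : 0 ≤ Cν := le_max_right _ _
  have hCMnn : 0 ≤ CM := le_max_right _ _
  have hcmnn : 0 ≤ cm := le_max_right _ _
  have hCκ : ∀ x, κ x ≤ Cκ := fun x => (hCκ₀ x).trans (le_max_left _ _)
  have hCν : ∀ x, ν x ≤ Cν := fun x => (hCν₀ x).trans (le_max_left _ _)
  have hCM : ∀ x, M x ≤ CM := fun x => (hCM₀ x).trans (le_max_left _ _)
  have hKpos : (0:ℝ) < K := lt_trans one_pos hK
  set Lr : ℝ := (Real.sqrt d + 1) * Cκ + 1 with hLrdef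
  have hsqnn : (0:ℝ) ≤ Real.sqrt d := Real.sqrt_nonneg _
  have hLrpos : 0 < Lr := by nlinarith [mul_nonneg (by linarith : (0:ℝ) ≤ Real.sqrt d + 1) hCκnn]
  have hCκLr : Cκ ≤ Lr := by nlinarith [mul_nonneg hsqnn hCκnn]
  set C₁ : ℝ := (4*Cν + 2*Cκ) * (K * CM) with hC₁def
  have hC₁nn : 0 ≤ C₁ := mul_nonneg (by linarith) (mul_nonneg hKpos.le hCMnn)
  have hσtilpos : 0 < σtil := lt_trans hσ0 hσtil1
  have hfrac : 0 < 1 - σ/σtil := by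
    have : σ/σtil < 1 := (div_lt_one hσtilpos).2 hσtil1
    linarith
  have hfracpos : 0 < σ/σtil := div_pos hσ0 hσtilpos
  set T : ℝ := min (1/(2*Lr)) ((1 - σ/σtil)/(C₁ + 2*cm + 1)) with hTdef
  have hTpos : 0 < T := by
    apply lt_min
    · apply div_pos one_pos; linarith
    · apply div_pos hfrac; linarith
  have hTnn : 0 ≤ T := hTpos.le
  have hTa : T * (2*Lr) ≤ 1 := by
    have h1 : T ≤ 1/(2*Lr) := min_le_left _ _
    rw [le_div_iff₀ (by linarith : (0:ℝ) < 2*Lr)] at h1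
    exact h1
  have hTb : T * (C₁ + 2*cm + 1) ≤ 1 - σ/σtil := by
    have h1 : T ≤ (1 - σ/σtil)/(C₁ + 2*cm + 1) := min_le_right _ _
    rw [le_div_iff₀ (by linarith : (0:ℝ) < C₁ + 2*cm + 1)] at h1
    exact h1
  clear_value Cκ Cν CM cm Lr C₁ T
  -- nonnegativity of γ on [0,∞) and of V
  have hγ0 : ∀ v : ℝ, 0 ≤ v → 0 ≤ γ v := by
    intro v hv
    rcases eq_or_lt_of_le hv with h | h
    · have ht : Tendsto γ (𝓝[>] (0:ℝ)) (𝓝 (γ 0)) :=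
        (hγc.tendsto 0).mono_left nhdsWithin_le_nhds
      have h0 : 0 ≤ γ 0 :=
        ge_of_tendsto ht (eventually_nhdsWithin_of_forall fun w hw => (hγpos w hw).le)
      rw [← h]; exact h0
    · exact (hγpos v h).le
  have hVnn : ∀ x, 0 ≤ V x := by
    intro x
    by_cases hx : x = 0
    · rw [hx, hV0]
    · exact (hVpos x hx).le
  -- comparison for γ using the lower bound on its derivative
  have hγmono : ∀ a b : ℝ, 0 ≤ a → a ≤ b → γ a ≤ γ b + cm * (b - a) := by
    intro a b ha hab
    have hd : ∀ x : ℝ, HasDerivAt (fun v => γ v + cm * v) (deriv γ x + cm) x := by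
      intro x
      have h1 : HasDerivAt γ (deriv γ x) x := (hγ1.differentiable one_ne_zero x).hasDerivAt
      have h2 : HasDerivAt (fun v : ℝ => cm * v) (cm * 1) x := (hasDerivAt_id x).const_mul cm
      have h3 := h1.add h2
      rw [mul_one] at h3
      exact h3
    have hmono : MonotoneOn (fun v => γ v + cm * v) (Ici (0:ℝ)) := by
      apply monotoneOn_of_deriv_nonneg (convex_Ici 0)
      · exact (hγ1.continuous.add (continuous_const.mul continuous_id)).continuousOn
      · intro x _
        exact (hd x).differentiableAt.differentiableWithinAt
      · intro x hx
        rw [interior_Ici] at hx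
        rw [(hd x).deriv]
        have := hc x (le_of_lt hx)
        have hcm : -c ≤ cm := by rw [hcmdef]; exact le_max_left _ _
        linarith
    have := hmono ha (ha.trans hab) hab
    simp only at this
    linarith
  refine ⟨fun _ => T, fun _ => hTpos, ⟨T, hTpos, fun _ => le_rfl⟩, ?_⟩
  intro xs hxs xbar hxbar hPP
  obtain ⟨hP1, hP2⟩ := hPP
  set u : EuclideanSpace ℝ (Fin m) := 𝒰 xs with hudef
  set A : ℝ := -⟪gradient V xbar, F xbar u⟫_ℝ with hAdef
  have hγVxbar : 0 ≤ γ (V xbar) := hγ0 _ (hVnn xbar)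
  have hAgt : σtil * γ (V xbar) < A := by
    have h := hP1; rw [hAdef]; linarith only [h]
  have hApos : 0 < A := lt_of_le_of_lt (mul_nonneg hσtilpos.le hγVxbar) hAgt
  have hWneg : ⟪gradient V xbar, F xbar u⟫_ℝ < 0 := by rw [hAdef] at hApos; linarith
  have habsW0 : |⟪gradient V xbar, F xbar u⟫_ℝ| = A := by
    rw [abs_of_neg hWneg, hAdef]
  set BF : ℝ := ‖F xbar u‖ with hBFdef
  have hBFnn : 0 ≤ BF := norm_nonneg _
  have hKMA : K * M xbar * A ≤ K * CM * A :=
    mul_le_mul_of_nonneg_right (mul_le_mul_of_nonneg_left (hCM xbar) hKpos.le) hApos.le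
  have hgB : ‖gradient V xbar‖ * BF ≤ K * CM * A := by
    have h := hP2
    rw [habsW0] at h
    nlinarith only [h, hKMA, sq_nonneg BF]
  have hB2 : BF^2 ≤ K * CM * A := by
    have h := hP2
    rw [habsW0] at h
    nlinarith only [h, hKMA, mul_nonneg (norm_nonneg (gradient V xbar)) hBFnn]
  clear_value A BF
  -- coordinate distance bound in Euclidean space
  have hcoorddist : ∀ (a b : EuclideanSpace ℝ (Fin d)) (i : Fin d),
      dist (a i) (b i) ≤ dist a b := by
    intro a b i
    rw [EuclideanSpace.dist_eq]
    have h1 : dist (a i) (b i) = Real.sqrt (dist (a i) (b i) ^ 2) :=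
      (Real.sqrt_sq dist_nonneg).symm
    rw [h1]
    apply Real.sqrt_le_sqrt
    exact Finset.single_le_sum (f := fun j => dist (a j) (b j) ^ 2)
      (fun j _ => sq_nonneg _) (Finset.mem_univ i)
  -- globally Lipschitz extension of `F (·, u)` from the sublevel set
  have huU : u ∈ U := h𝒰U xs
  have hlipcoord : LipschitzOnWith Cκ.toNNReal
      (fun x : EuclideanSpace ℝ (Fin d) => (fun i => F x u i : Fin d → ℝ))
      {x | V x ≤ V xs} := by
    apply LipschitzOnWith.of_dist_le_mul
    intro x hx y hy
    rw [Real.coe_toNNReal _ hCκnn]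
    refine (dist_pi_le_iff (mul_nonneg hCκnn dist_nonneg)).2 fun i => ?_
    refine le_trans (hcoorddist (F x u) (F y u) i) ?_
    rw [dist_eq_norm, dist_eq_norm]
    refine le_trans (hκlip xs x y hx hy) ?_
    exact mul_le_mul_of_nonneg_right (hCκ xs) (norm_nonneg _)
  obtain ⟨g0, hg0lip, hg0eq⟩ := hlipcoord.extend_pi
  set ftilde : EuclideanSpace ℝ (Fin d) → EuclideanSpace ℝ (Fin d) :=
    fun x => (WithLp.toLp 2 (g0 x) : EuclideanSpace ℝ (Fin d)) with hftdef
  have heq : ∀ x : EuclideanSpace ℝ (Fin d), V x ≤ V xs → ftilde x = F x u := by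
    intro x hx
    have h := hg0eq (show x ∈ {x | V x ≤ V xs} from hx)
    show WithLp.toLp 2 (g0 x) = F x u
    rw [← h]
  have hflip : ∀ x y : EuclideanSpace ℝ (Fin d), ‖ftilde x - ftilde y‖ ≤ Lr * ‖x - y‖ := by
    intro x y
    have hcoord : ∀ i, |g0 x i - g0 y i| ≤ Cκ * ‖x - y‖ := by
      intro i
      have h1 : dist (g0 x i) (g0 y i) ≤ dist (g0 x) (g0 y) := dist_le_pi_dist _ _ i
      have h2 : dist (g0 x) (g0 y) ≤ Cκ.toNNReal * dist x y := hg0lip.dist_le_mul x y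
      rw [Real.coe_toNNReal _ hCκnn, dist_eq_norm] at h2
      rw [Real.dist_eq] at h1
      exact h1.trans h2
    rw [EuclideanSpace.norm_eq]
    have hsum : (∑ i, ‖(ftilde x - ftilde y) i‖^2) ≤ (d : ℝ) * (Cκ*‖x-y‖)^2 := by
      have hterm : ∀ i : Fin d, ‖(ftilde x - ftilde y) i‖^2 ≤ (Cκ*‖x-y‖)^2 := by
        intro i
        show ‖g0 x i - g0 y i‖^2 ≤ (Cκ*‖x-y‖)^2
        rw [Real.norm_eq_abs]
        exact pow_le_pow_left₀ (abs_nonneg _) (hcoord i) 2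
      calc (∑ i, ‖(ftilde x - ftilde y) i‖^2) ≤ ∑ _i : Fin d, (Cκ*‖x-y‖)^2 :=
            Finset.sum_le_sum (fun i _ => hterm i)
        _ = (d : ℝ) * (Cκ*‖x-y‖)^2 := by
            rw [Finset.sum_const, Finset.card_univ, Fintype.card_fin, nsmul_eq_mul]
    calc Real.sqrt (∑ i, ‖(ftilde x - ftilde y) i‖^2)
        ≤ Real.sqrt ((d : ℝ) * (Cκ*‖x-y‖)^2) := Real.sqrt_le_sqrt hsum
      _ = Real.sqrt d * (Cκ*‖x-y‖) := by
          rw [Real.sqrt_mul (Nat.cast_nonneg d), Real.sqrt_sq (by positivity)]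
      _ ≤ Lr * ‖x-y‖ := by nlinarith [norm_nonneg (x - y), mul_nonneg hsqnn hCκnn]
  have hlipW : LipschitzWith Lr.toNNReal ftilde :=
    LipschitzWith.of_dist_le_mul fun x y => by
      rw [Real.coe_toNNReal _ hLrpos.le, dist_eq_norm, dist_eq_norm]; exact hflip x y
  have hLip2 : Lr * (2*BF*T) ≤ BF := by nlinarith only [mul_le_mul_of_nonneg_left hTa hBFnn]
  -- Picard–Lindelöf
  have h2BF : (0:ℝ) ≤ 2*BF := mul_nonneg (by norm_num) hBFnn
  have hRnn : (0:ℝ) ≤ 2*BF*T := mul_nonneg h2BF hTnn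
  have hPL : IsPicardLindelof (fun _ x => ftilde x) (tmin := 0) (tmax := T) ⟨0, ⟨le_rfl, hTnn⟩⟩
      xbar (2*BF*T).toNNReal 0 (2*BF).toNNReal Lr.toNNReal :=
    { lipschitzOnWith := fun t _ => hlipW.lipschitzOnWith
      continuousOn := fun x _ => continuousOn_const
      norm_le := by
        intro t _ x hx
        rw [Metric.mem_closedBall, dist_eq_norm, Real.coe_toNNReal _ hRnn] at hx
        rw [Real.coe_toNNReal _ h2BF]
        have h1 := hflip x xbar
        rw [heq xbar hxbar] at h1
        have h2 := norm_sub_norm_le (ftilde x) (F xbar u)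
        have h3 : Lr*‖x - xbar‖ ≤ Lr*(2*BF*T) := mul_le_mul_of_nonneg_left hx hLrpos.le
        linarith only [h1, h2, h3, hLip2, hBFdef]
      mul_max_le := by
        simp only [NNReal.coe_zero, sub_zero, tsub_zero, sub_self, Real.coe_toNNReal _ h2BF,
          Real.coe_toNNReal _ hRnn, max_eq_left hTnn]
        exact le_rfl }
  obtain ⟨ξ, hξ0', hξd⟩ := hPL.exists_eq_forall_mem_Icc_hasDerivWithinAt₀
  have hξ0 : ξ 0 = xbar := hξ0'
  have hξcont : ContinuousOn ξ (Icc 0 T) := fun t ht => (hξd t ht).continuousWithinAt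
  -- Grönwall bound on the distance from xbar
  have hexp : ∀ y : ℝ, 0 ≤ y → 2*y ≤ 1 → Real.exp y - 1 ≤ 2*y := by
    intro y hy hy2
    have h1 : 1 - y ≤ Real.exp (-y) := by
      have := Real.add_one_le_exp (-y); linarith
    have h2 : Real.exp (-y) * Real.exp y = 1 := by
      rw [← Real.exp_add]; simp
    have h3 : 0 < Real.exp y := Real.exp_pos y
    nlinarith only [mul_le_mul_of_nonneg_right h1 h3.le, h2, hy, hy2, h3,
      mul_nonneg hy (by linarith only [hy2] : (0:ℝ) ≤ 1 - 2*y),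
      (by linarith only [hy2] : (0:ℝ) < 1 - y)]
  have hDball : ∀ t ∈ Icc (0:ℝ) T, ‖ξ t - xbar‖ ≤ 2*BF*T := by
    have hc' : ContinuousOn (fun s => ξ s - xbar) (Icc 0 T) := hξcont.sub continuousOn_const
    have hd' : ∀ x ∈ Ico (0:ℝ) T,
        HasDerivWithinAt (fun s => ξ s - xbar) (ftilde (ξ x)) (Ici x) x := fun x hx =>
      ((hξd x (Ico_subset_Icc_self hx)).sub_const xbar).mono_of_mem_nhdsWithin
        (Icc_mem_nhdsGE_of_mem hx)
    have h0' : ‖ξ 0 - xbar‖ ≤ 0 := by simp [hξ0]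
    have hb' : ∀ x ∈ Ico (0:ℝ) T, ‖ftilde (ξ x)‖ ≤ Lr * ‖ξ x - xbar‖ + BF := by
      intro x _
      have h1 := hflip (ξ x) xbar
      rw [heq xbar hxbar] at h1
      have h2 := norm_sub_norm_le (ftilde (ξ x)) (F xbar u)
      linarith
    intro t ht
    have h := norm_le_gronwallBound_of_norm_deriv_right_le hc' hd' h0' hb' t ht
    rw [gronwallBound_of_K_ne_0 hLrpos.ne'] at h
    rw [sub_zero] at h
    have hyb : Real.exp (Lr*t) - 1 ≤ 2*(Lr*t) := by
      apply hexp _ (mul_nonneg hLrpos.le ht.1)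
      have h9 : Lr * t ≤ Lr * T := mul_le_mul_of_nonneg_left ht.2 hLrpos.le
      linarith only [h9, hTa]
    have h5 : BF/Lr*(Real.exp (Lr*t) - 1) ≤ BF/Lr*(2*(Lr*t)) :=
      mul_le_mul_of_nonneg_left hyb (div_nonneg hBFnn hLrpos.le)
    have h6 : BF/Lr*(2*(Lr*t)) = 2*BF*t := by field_simp
    have h7 : 2*BF*t ≤ 2*BF*T := by nlinarith only [mul_nonneg hBFnn (sub_nonneg.2 ht.2)]
    simp only [zero_mul, zero_add] at h
    linarith only [h, h5, h6, h7]
  -- derivative of V along ξ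
  have hinner : ∀ (y w : EuclideanSpace ℝ (Fin d)), ⟪gradient V y, w⟫_ℝ = fderiv ℝ V y w :=
    fun y w => InnerProductSpace.toDual_symm_apply
  have hVd : ∀ t ∈ Icc (0:ℝ) T,
      HasDerivWithinAt (fun s => V (ξ s)) (⟪gradient V (ξ t), ftilde (ξ t)⟫_ℝ) (Icc 0 T) t := by
    intro t ht
    have h := ((hV.differentiable one_ne_zero (ξ t)).hasFDerivAt).comp_hasDerivWithinAt t (hξd t ht)
    rw [hinner]
    exact h
  -- pointwise estimate on the change of W
  have hW1 : ∀ t ∈ Icc (0:ℝ) T, V (ξ t) ≤ V xs →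
      |⟪gradient V (ξ t), F (ξ t) u⟫_ℝ - ⟪gradient V xbar, F xbar u⟫_ℝ| ≤ C₁ * T * A := by
    intro t ht hmem
    have hD := hDball t ht
    have hFd : ‖F (ξ t) u - F xbar u‖ ≤ Cκ * (2*BF*T) := by
      refine le_trans (hκlip xs (ξ t) xbar hmem hxbar) ?_
      refine le_trans (mul_le_mul_of_nonneg_right (hCκ xs) (norm_nonneg _)) ?_
      exact mul_le_mul_of_nonneg_left hD hCκnn
    have hgd : ‖gradient V (ξ t) - gradient V xbar‖ ≤ Cν * (2*BF*T) := by
      refine le_trans (hνlip xs (ξ t) xbar hmem hxbar) ?_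
      refine le_trans (mul_le_mul_of_nonneg_right (hCν xs) (norm_nonneg _)) ?_
      exact mul_le_mul_of_nonneg_left hD hCνnn
    have hFn : ‖F (ξ t) u‖ ≤ 2*BF := by
      have h5 := norm_sub_norm_le (F (ξ t) u) (F xbar u)
      have a1 : Cκ*(2*BF*T) ≤ Lr*(2*BF*T) :=
        mul_le_mul_of_nonneg_right hCκLr (mul_nonneg (mul_nonneg (by norm_num) hBFnn) hTnn)
      linarith only [h5, hFd, a1, hLip2, hBFdef]
    have key : ⟪gradient V (ξ t), F (ξ t) u⟫_ℝ - ⟪gradient V xbar, F xbar u⟫_ℝ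
        = ⟪gradient V (ξ t) - gradient V xbar, F (ξ t) u⟫_ℝ
          + ⟪gradient V xbar, F (ξ t) u - F xbar u⟫_ℝ := by
      rw [inner_sub_left, inner_sub_right]; ring
    rw [key]
    have i1 : |⟪gradient V (ξ t) - gradient V xbar, F (ξ t) u⟫_ℝ| ≤ (Cν*(2*BF*T))*(2*BF) :=
      le_trans (abs_real_inner_le_norm _ _)
        (mul_le_mul hgd hFn (norm_nonneg _) (mul_nonneg hCνnn (mul_nonneg (mul_nonneg (by norm_num) hBFnn) hTnn)))
    have i2 : |⟪gradient V xbar, F (ξ t) u - F xbar u⟫_ℝ|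
        ≤ ‖gradient V xbar‖*(Cκ*(2*BF*T)) :=
      le_trans (abs_real_inner_le_norm _ _) (mul_le_mul_of_nonneg_left hFd (norm_nonneg _))
    have i3 : (Cν*(2*BF*T))*(2*BF) ≤ (4*Cν*T)*(K*CM*A) := by
      have e : (Cν*(2*BF*T))*(2*BF) = (4*Cν*T)*BF^2 := by ring
      rw [e]
      exact mul_le_mul_of_nonneg_left hB2 (mul_nonneg (mul_nonneg (by norm_num : (0:ℝ) ≤ 4) hCνnn) hTnn)
    have i4 : ‖gradient V xbar‖*(Cκ*(2*BF*T)) ≤ (2*Cκ*T)*(K*CM*A) := by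
      have e : ‖gradient V xbar‖*(Cκ*(2*BF*T)) = (2*Cκ*T)*(‖gradient V xbar‖*BF) := by ring
      rw [e]
      exact mul_le_mul_of_nonneg_left hgB (mul_nonneg (mul_nonneg (by norm_num : (0:ℝ) ≤ 2) hCκnn) hTnn)
    have efin : (4*Cν*T)*(K*CM*A) + (2*Cκ*T)*(K*CM*A) = C₁*T*A := by
      rw [hC₁def]; ring
    calc |⟪gradient V (ξ t) - gradient V xbar, F (ξ t) u⟫_ℝ
          + ⟪gradient V xbar, F (ξ t) u - F xbar u⟫_ℝ|
        ≤ |⟪gradient V (ξ t) - gradient V xbar, F (ξ t) u⟫_ℝ|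
          + |⟪gradient V xbar, F (ξ t) u - F xbar u⟫_ℝ| := abs_add_le _ _
      _ ≤ C₁*T*A := by linarith only [i1, i2, i3, i4, efin]
  -- the sublevel property V (ξ t) ≤ V xbar on [0, T], by the fencing lemma
  have hQ : ∀ t ∈ Icc (0:ℝ) T, V (ξ t) ≤ V xbar := by
    have hcont : ContinuousOn (fun s => V (ξ s)) (Icc 0 T) :=
      hV.continuous.comp_continuousOn hξcont
    have hderiv : ∀ x ∈ Ico (0:ℝ) T, HasDerivWithinAt (fun s => V (ξ s))
        (⟪gradient V (ξ x), ftilde (ξ x)⟫_ℝ) (Ici x) x := fun x hx =>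
      (hVd x (Ico_subset_Icc_self hx)).mono_of_mem_nhdsWithin (Icc_mem_nhdsGE_of_mem hx)
    have hinit : V (ξ 0) ≤ V xbar := by rw [hξ0]
    have hB : ∀ x : ℝ, HasDerivAt (fun _ : ℝ => V xbar) 0 x := fun x => hasDerivAt_const x _
    have hbound : ∀ x ∈ Ico (0:ℝ) T, V (ξ x) = V xbar →
        ⟪gradient V (ξ x), ftilde (ξ x)⟫_ℝ < 0 := by
      intro x hx hEq
      have hmem : V (ξ x) ≤ V xs := by rw [hEq]; exact hxbar
      rw [heq (ξ x) hmem]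
      have h1 := hW1 x (Ico_subset_Icc_self hx) hmem
      have h2 := (abs_le.1 h1).2
      have f1 : C₁*T*A ≤ (1-σ/σtil)*A := by
        apply mul_le_mul_of_nonneg_right _ hApos.le
        linarith only [hTb, mul_nonneg hcmnn hTnn, hTnn]
      have f2 : 0 < (σ/σtil)*A := mul_pos hfracpos hApos
      have hW0A : ⟪gradient V xbar, F xbar u⟫_ℝ = -A := by rw [hAdef]; ring
      rw [hW0A] at h2
      linarith only [h2, f1, f2]
    intro t ht
    exact image_le_of_deriv_right_lt_deriv_boundary hcont hderiv hinit hB hbound ht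
  -- bound |W| ≤ 2A along the solution, and the resulting bound on V
  have hC₁T1 : C₁*T ≤ 1 := by linarith only [hTb, mul_nonneg hcmnn hTnn, hTnn, hfracpos]
  have habsW : ∀ s ∈ Icc (0:ℝ) T, ‖⟪gradient V (ξ s), ftilde (ξ s)⟫_ℝ‖ ≤ 2*A := by
    intro s hs
    have hmem : V (ξ s) ≤ V xs := (hQ s hs).trans hxbar
    rw [heq (ξ s) hmem, Real.norm_eq_abs]
    have h1 := hW1 s hs hmem
    have hW0A : ⟪gradient V xbar, F xbar u⟫_ℝ = -A := by rw [hAdef]; ring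
    have h2 : |⟪gradient V (ξ s), F (ξ s) u⟫_ℝ|
        ≤ |⟪gradient V (ξ s), F (ξ s) u⟫_ℝ - ⟪gradient V xbar, F xbar u⟫_ℝ|
          + |⟪gradient V xbar, F xbar u⟫_ℝ| := by
      have := abs_add_le (⟪gradient V (ξ s), F (ξ s) u⟫_ℝ - ⟪gradient V xbar, F xbar u⟫_ℝ)
        (⟪gradient V xbar, F xbar u⟫_ℝ)
      simpa using this
    rw [habsW0] at h2
    have h3 : C₁*T*A ≤ A :=
      (by linarith only [mul_nonneg (by linarith only [hC₁T1] : (0:ℝ) ≤ 1 - C₁*T) hApos.le] :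
        C₁*T*A ≤ A)
    linarith only [h1, h2, h3]
  have hVdist : ∀ t ∈ Icc (0:ℝ) T, V xbar - V (ξ t) ≤ 2*A*t := by
    have h := norm_image_sub_le_of_norm_deriv_le_segment'
      (f := fun s => V (ξ s)) (f' := fun s => ⟪gradient V (ξ s), ftilde (ξ s)⟫_ℝ)
      hVd (fun s hs => habsW s (Ico_subset_Icc_self hs))
    intro t ht
    have h2 := h t ht
    simp only [hξ0, sub_zero, Real.norm_eq_abs] at h2
    have h3 := (abs_le.1 h2).1
    linarith only [h3]
  -- conclusion
  refine ⟨ξ, hξ0, ?_, ?_⟩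
  · intro t ht
    have hmem : V (ξ t) ≤ V xs := (hQ t ht).trans hxbar
    have h := hξd t ht
    rw [heq (ξ t) hmem] at h
    exact h
  · intro t ht
    have ht' : t ∈ Icc (0:ℝ) T := Ico_subset_Icc_self ht
    have hmem : V (ξ t) ≤ V xs := (hQ t ht').trans hxbar
    have h1 := (abs_le.1 (hW1 t ht' hmem)).2
    have hW0A : ⟪gradient V xbar, F xbar u⟫_ℝ = -A := by rw [hAdef]; ring
    rw [hW0A] at h1
    have h2 := hVdist t ht'
    have hQt := hQ t ht'
    have hγb := hγmono (V (ξ t)) (V xbar) (hVnn _) hQt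
    have e2a : cm * (V xbar - V (ξ t)) ≤ cm * (2*A*t) := mul_le_mul_of_nonneg_left h2 hcmnn
    have e2b : cm * (2*A*t) ≤ cm * (2*A*T) := by
      apply mul_le_mul_of_nonneg_left _ hcmnn
      linarith only [mul_nonneg hApos.le (sub_nonneg.2 ht.2.le)]
    have e4 : σ * γ (V (ξ t)) ≤ σ * γ (V xbar) + cm*(2*A*T) := by
      have s1 := mul_le_mul_of_nonneg_left hγb hσ0.le
      have s2 : 0 ≤ (1-σ) * (cm * (V xbar - V (ξ t))) :=
        mul_nonneg (by linarith only [hσ1] : (0:ℝ) ≤ 1 - σ) (mul_nonneg hcmnn (by linarith only [hQt] : (0:ℝ) ≤ V xbar - V (ξ t)))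
      linarith only [s1, s2, e2a, e2b]
    have e5 : σ * γ (V xbar) < (σ/σtil) * A := by
      have e : σ * γ (V xbar) = (σ/σtil) * (σtil * γ (V xbar)) := by
        field_simp
      rw [e]
      exact (mul_lt_mul_iff_right₀ hfracpos).2 hAgt
    have e6 : C₁*T*A + 2*cm*T*A ≤ (1 - σ/σtil)*A := by
      have h' : (C₁ + 2*cm)*T ≤ 1 - σ/σtil := by linarith only [hTb, hTnn]
      have h'' := mul_le_mul_of_nonneg_right h' hApos.le
      linarith only [h'']
    linarith only [h1, e4, e5, e6]
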